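/- Let α, β, L, ω ∈ ℝ with L ≠ 0. Suppose differentiable functions x, θ : ℝ → ℝ satisfy ẋ(t) = β·sin θ(t) and θ̇(t) = ω − L·x(t) − L·α·sin θ(t) for all t, and sin θ(t) = 0 for all t. Then θ is constant and x(t) = ω/L for all t; that is, the only whole trajectories contained in the set { (x, θ) : sin θ = 0 } are the equilibria. -/

import Mathlib

/-- For the classical PLL with filter `H(s) = (β + αs)/s`, i.e. the planar
system `ẋ = β sin θ`, `θ̇ = ω − L x − L α sin θ`, the only whole trajectories
contained in the set `{(x, θ) : sin θ = 0}` are the equilibria: such a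
trajectory has `θ` constant and `x ≡ ω/L`. -/
theorem pll_invariant_zero_set (α β L ω : ℝ) (hL : L ≠ 0) (x θ : ℝ → ℝ)
    (hx : ∀ t : ℝ, HasDerivAt x (β * Real.sin (θ t)) t)
    (hθ : ∀ t : ℝ, HasDerivAt θ (ω - L * x t - L * α * Real.sin (θ t)) t)
    (hzero : ∀ t : ℝ, Real.sin (θ t) = 0) :
    (∀ t s : ℝ, θ t = θ s) ∧ (∀ t : ℝ, x t = ω / L) := by
  -- x has zero derivative, hence is constant
  have hx0 : ∀ t : ℝ, HasDerivAt x 0 t := by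
    intro t; have := hx t; rwa [hzero t, mul_zero] at this
  have hxconst : ∀ t : ℝ, x t = x 0 := fun t =>
    is_const_of_deriv_eq_zero (fun s => (hx0 s).differentiableAt)
      (fun s => (hx0 s).deriv) t 0
  set c : ℝ := ω - L * x 0 with hc
  have hθ' : ∀ t : ℝ, HasDerivAt θ c t := by
    intro t
    have := hθ t
    rwa [hzero t, mul_zero, sub_zero, hxconst t] at this
  -- θ t - c * t is constant
  have hg : ∀ t : ℝ, HasDerivAt (fun s => θ s - c * s) 0 t := by
    intro t
    have := (hθ' t).sub ((hasDerivAt_id t).const_mul c)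
    simp only [mul_one, sub_self] at this; exact this
  have hgconst : ∀ t : ℝ, θ t - c * t = θ 0 := by
    intro t
    have := is_const_of_deriv_eq_zero (f := fun s => θ s - c * s)
      (fun s => (hg s).differentiableAt) (fun s => (hg s).deriv) t 0
    simpa using this
  have hθlin : ∀ t : ℝ, θ t = c * t + θ 0 := by
    intro t; have := hgconst t; linarith
  -- c must be zero
  have hcos : Real.cos (θ 0) ≠ 0 := by
    intro h
    have := Real.sin_sq_add_cos_sq (θ 0)
    rw [hzero 0, h] at this; norm_num at this
  have hczero : c = 0 := by
    by_contra hcne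
    have := hzero ((Real.pi / 2) / c)
    rw [hθlin, mul_div_cancel₀ _ hcne, Real.sin_add, Real.sin_pi_div_two,
      Real.cos_pi_div_two, hzero 0] at this
    simp at this
    exact hcos this
  constructor
  · intro t s; rw [hθlin t, hθlin s, hczero]; ring
  · intro t
    rw [hxconst t]
    have : ω - L * x 0 = 0 := by rw [← hc, hczero]
    field_simp
    linarith
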